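/- Let 0<x<1 be real and r∈ℂ with Re(r)>0; set r* := r−1. Then for every complex w with |w|<1 and |x^{2r−2}w|<1 the series ∑_{m=1}^∞ (1/m)·( (x^{r*m}−x^{−r*m})(x^m+x^{−m}) / (x^{rm}−x^{−rm}) )·w^m converges absolutely and exp( − ∑_{m=1}^∞ (1/m)·( (x^{r*m}−x^{−r*m})(x^m+x^{−m}) / (x^{rm}−x^{−rm}) )·w^m ) = (1−w) · (x²w;x^{2r})_∞ / (x^{2r−2}w;x^{2r})_∞. -/

import Mathlib

open Complex

/-- `x^w := exp(w · log x)` for real `x` and complex `w`. -/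
noncomputable def xpow (x : ℝ) (w : ℂ) : ℂ := Complex.exp (w * (Real.log x : ℂ))

/-- The infinite `q`-Pochhammer product `(z;q)_∞ = ∏_{j=0}^∞ (1 − q^j z)`. -/
noncomputable def qPoch (z q : ℂ) : ℂ := ∏' j : ℕ, (1 - q ^ j * z)

/-- `Θ_q(z) = (z;q)_∞ (q z⁻¹;q)_∞ (q;q)_∞`. -/
noncomputable def jacTheta0 (q z : ℂ) : ℂ := qPoch z q * qPoch (q * z⁻¹) q * qPoch q q

/-- The Jacobi theta function `[u]_r = x^{u²/r − u} Θ_{x^{2r}}(x^{2u}) / ((x^{2r};x^{2r})_∞)³`. -/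
noncomputable def jTheta (x : ℝ) (r u : ℂ) : ℂ :=
  xpow x (u ^ 2 / r - u) * jacTheta0 (xpow x (2 * r)) (xpow x (2 * u)) /
    (qPoch (xpow x (2 * r)) (xpow x (2 * r))) ^ 3

/-- `m`-th term of the `F_j F_j` contraction series (with `r* = r − 1`). -/
noncomputable def FFterm (x : ℝ) (r w : ℂ) (m : ℕ) : ℂ :=
  (1 / (m : ℂ)) * ((xpow x ((r - 1) * m) - xpow x (-(r - 1) * m)) *
      (xpow x m + xpow x (-m)) / (xpow x (r * m) - xpow x (-r * m))) * w ^ m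

lemma xpow_add (x : ℝ) (a b : ℂ) : xpow x (a + b) = xpow x a * xpow x b := by
  simp [xpow, add_mul, Complex.exp_add]

lemma xpow_ne_zero (x : ℝ) (a : ℂ) : xpow x a ≠ 0 := Complex.exp_ne_zero _

lemma xpow_neg (x : ℝ) (a : ℂ) : xpow x (-a) = (xpow x a)⁻¹ := by
  simp [xpow, ← Complex.exp_neg]

lemma xpow_nat_mul (x : ℝ) (a : ℂ) (n : ℕ) : xpow x (a * n) = xpow x a ^ n := by
  rw [xpow, xpow, mul_comm a (n : ℂ), mul_assoc, Complex.exp_nat_mul]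

lemma norm_xpow {x : ℝ} (hx0 : 0 < x) (a : ℂ) : ‖xpow x a‖ = x ^ a.re := by
  rw [xpow, Complex.norm_exp, Real.rpow_def_of_pos hx0]
  congr 1
  simp [Complex.mul_re, mul_comm]

lemma norm_xpow_lt_one {x : ℝ} (hx0 : 0 < x) (hx1 : x < 1) {a : ℂ} (ha : 0 < a.re) :
    ‖xpow x a‖ < 1 := by
  rw [norm_xpow hx0]
  exact Real.rpow_lt_one hx0.le hx1 ha

lemma alg_id (u v c n : ℂ) (hu : u ≠ 0) (hv : v ≠ 0) (hn : n ≠ 0) (h1 : u ^ 2 ≠ 1) :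
    1 / n * ((u * v⁻¹ - u⁻¹ * v) * (v + v⁻¹) / (u - u⁻¹)) * c =
      c / n + ((1 - u ^ 2)⁻¹ * (v ^ 2 * c / n) - (1 - u ^ 2)⁻¹ * (u ^ 2 * (v ^ 2)⁻¹ * c / n)) := by
  have h1' : u ^ 2 - 1 ≠ 0 := sub_ne_zero.mpr h1
  have h1'' : 1 - u ^ 2 ≠ 0 := sub_ne_zero.mpr (Ne.symm h1)
  have hv2 : v ^ 2 ≠ 0 := pow_ne_zero 2 hv
  have hd : u - u⁻¹ ≠ 0 := by
    intro h
    apply h1'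
    have := sub_eq_zero.mp h
    field_simp at this
    linear_combination this
  have key : (u * v⁻¹ - u⁻¹ * v) * (v + v⁻¹) / (u - u⁻¹) =
      (u ^ 2 - v ^ 2) * (v ^ 2 + 1) / ((u ^ 2 - 1) * v ^ 2) := by
    rw [div_eq_div_iff hd (mul_ne_zero h1' hv2)]
    field_simp
  have e1 : v ^ 2 * c / n = v ^ 4 * c / (v ^ 2 * n) := by
    rw [div_eq_div_iff hn (mul_ne_zero hv2 hn)]; ring
  have e2 : u ^ 2 * (v ^ 2)⁻¹ * c / n = u ^ 2 * c / (v ^ 2 * n) := by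
    rw [div_eq_div_iff hn (mul_ne_zero hv2 hn)]
    linear_combination u ^ 2 * c * n * (mul_inv_cancel₀ hv2)
  have e3 : (1 - u ^ 2)⁻¹ * (v ^ 4 * c / (v ^ 2 * n)) - (1 - u ^ 2)⁻¹ * (u ^ 2 * c / (v ^ 2 * n)) =
      (v ^ 4 * c - u ^ 2 * c) / (v ^ 2 * n * (1 - u ^ 2)) := by
    rw [← mul_sub, ← sub_div, inv_mul_eq_div, div_div]
  have e4 : 1 / n * ((u ^ 2 - v ^ 2) * (v ^ 2 + 1) / ((u ^ 2 - 1) * v ^ 2)) * c =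
      (u ^ 2 - v ^ 2) * (v ^ 2 + 1) * c / (n * ((u ^ 2 - 1) * v ^ 2)) := by
    rw [div_mul_div_comm, one_mul, div_mul_eq_mul_div]
  rw [key, e1, e2, e3, e4, eq_comm, add_comm, ← eq_sub_iff_add_eq,
    div_sub_div _ _ (mul_ne_zero hn (mul_ne_zero h1' hv2)) hn,
    div_eq_div_iff (mul_ne_zero (mul_ne_zero hv2 hn) h1'')
      (mul_ne_zero (mul_ne_zero hn (mul_ne_zero h1' hv2)) hn)]
  ring

lemma FFterm_eq {x : ℝ} (hx0 : 0 < x) (hx1 : x < 1) {r : ℂ} (hr : 0 < r.re) (w : ℂ) (m : ℕ) :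
    FFterm x r w (m + 1) = w ^ (m + 1) / ((m + 1 : ℕ) : ℂ) +
      ((1 - xpow x (2 * r) ^ (m + 1))⁻¹ * ((xpow x 2 * w) ^ (m + 1) / ((m + 1 : ℕ) : ℂ)) -
       (1 - xpow x (2 * r) ^ (m + 1))⁻¹ *
         ((xpow x (2 * r - 2) * w) ^ (m + 1) / ((m + 1 : ℕ) : ℂ))) := by
  set n : ℂ := ((m + 1 : ℕ) : ℂ) with hndef
  set u : ℂ := xpow x (r * n) with hudef
  set v : ℂ := xpow x n with hvdef
  have hn0 : n ≠ 0 := by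
    rw [hndef]
    exact Nat.cast_ne_zero.mpr (Nat.succ_ne_zero m)
  have hu : u ≠ 0 := xpow_ne_zero _ _
  have hv : v ≠ 0 := xpow_ne_zero _ _
  have hmre : (0 : ℝ) < ((m + 1 : ℕ) : ℝ) := by positivity
  have hre : 0 < (r * n + r * n).re := by
    rw [hndef]
    simp only [Complex.add_re, Complex.mul_re, Complex.natCast_re, Complex.natCast_im,
      mul_zero, sub_zero]
    nlinarith [mul_pos hr hmre]
  have hu2norm : ‖u ^ 2‖ < 1 := by
    rw [hudef, pow_two, ← xpow_add]
    exact norm_xpow_lt_one hx0 hx1 hre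
  have hu2 : u ^ 2 ≠ 1 := by
    intro h
    rw [h] at hu2norm
    simp at hu2norm
  have e1 : xpow x ((r - 1) * n) = u * v⁻¹ := by
    rw [show (r - 1) * n = r * n + -n by ring, xpow_add, xpow_neg]
  have e2 : xpow x (-(r - 1) * n) = u⁻¹ * v := by
    rw [show -(r - 1) * n = -(r * n) + n by ring, xpow_add, xpow_neg]
  have e3 : xpow x (-n) = v⁻¹ := xpow_neg x n
  have e4 : xpow x (-r * n) = u⁻¹ := by
    rw [show -r * n = -(r * n) by ring, xpow_neg]
  have e5 : xpow x (2 * r) ^ (m + 1) = u ^ 2 := by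
    rw [← xpow_nat_mul x (2 * r) (m + 1), hudef, pow_two, ← xpow_add, ← hndef]
    congr 1
    ring
  have e6 : xpow x 2 ^ (m + 1) = v ^ 2 := by
    rw [← xpow_nat_mul x 2 (m + 1), hvdef, pow_two, ← xpow_add, ← hndef]
    congr 1
    ring
  have e7 : xpow x (2 * r - 2) ^ (m + 1) = u ^ 2 * (v ^ 2)⁻¹ := by
    rw [← xpow_nat_mul x (2 * r - 2) (m + 1), hudef, hvdef, pow_two, pow_two,
      ← xpow_add, ← xpow_add, ← xpow_neg, ← xpow_add, ← hndef]
    congr 1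
    ring
  show (1 / n) * ((xpow x ((r - 1) * n) - xpow x (-(r - 1) * n)) *
      (xpow x n + xpow x (-n)) / (xpow x (r * n) - xpow x (-r * n))) * w ^ (m + 1) = _
  rw [e1, e2, e3, e4, e5, mul_pow, mul_pow, e6, e7]
  exact alg_id u v (w ^ (m + 1)) n hu hv hn0 hu2

theorem stmt17 (x : ℝ) (hx0 : 0 < x) (hx1 : x < 1) (r : ℂ) (hr : 0 < r.re)
    (w : ℂ) (hw : ‖w‖ < 1) (hw' : ‖xpow x (2 * r - 2) * w‖ < 1) :
    Summable (fun m : ℕ => ‖FFterm x r w (m + 1)‖) ∧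
    Complex.exp (-∑' m : ℕ, FFterm x r w (m + 1)) =
      (1 - w) * qPoch (xpow x 2 * w) (xpow x (2 * r)) /
        qPoch (xpow x (2 * r - 2) * w) (xpow x (2 * r)) := by
  set q : ℂ := xpow x (2 * r) with hqdef
  set A : ℂ := xpow x 2 * w with hAdef
  set B : ℂ := xpow x (2 * r - 2) * w with hBdef
  have hq : ‖q‖ < 1 := by
    refine norm_xpow_lt_one hx0 hx1 ?_
    have h2 : ((2 : ℂ) * r).re = 2 * r.re := by simp
    rw [h2]; linarith
  have hx2 : ‖xpow x (2 : ℂ)‖ < 1 := by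
    refine norm_xpow_lt_one hx0 hx1 ?_
    norm_num
  have hA : ‖A‖ < 1 := by
    rw [hAdef, norm_mul]
    nlinarith [norm_nonneg w, norm_nonneg (xpow x (2 : ℂ))]
  have hB : ‖B‖ < 1 := hw'
  have hqj : ∀ j : ℕ, ‖q ^ j‖ ≤ 1 := fun j => by
    rw [norm_pow]; exact pow_le_one₀ (norm_nonneg q) hq.le
  have hAj : ∀ j : ℕ, ‖q ^ j * A‖ < 1 := fun j => by
    rw [norm_mul]
    nlinarith [norm_nonneg A, norm_nonneg (q ^ j), hqj j]
  have hBj : ∀ j : ℕ, ‖q ^ j * B‖ < 1 := fun j => by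
    rw [norm_mul]
    nlinarith [norm_nonneg B, norm_nonneg (q ^ j), hqj j]
  -- the double families
  set Fa : ℕ → ℕ → ℂ := fun m j => (q ^ j * A) ^ (m + 1) / ((m + 1 : ℕ) : ℂ) with hFadef
  set Fb : ℕ → ℕ → ℂ := fun m j => (q ^ j * B) ^ (m + 1) / ((m + 1 : ℕ) : ℂ) with hFbdef
  -- norm bound
  have bound : ∀ (C : ℂ) (m j : ℕ), ‖(q ^ j * C) ^ (m + 1) / ((m + 1 : ℕ) : ℂ)‖
      ≤ ‖C‖ ^ (m + 1) * ‖q‖ ^ j := by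
    intro C m j
    rw [norm_div, Complex.norm_natCast]
    have h1 : ‖(q ^ j * C) ^ (m + 1)‖ / ((m + 1 : ℕ) : ℝ) ≤ ‖(q ^ j * C) ^ (m + 1)‖ := by
      apply div_le_self (norm_nonneg _)
      exact_mod_cast Nat.succ_le_succ (Nat.zero_le m)
    refine h1.trans ?_
    rw [norm_pow, norm_mul, norm_pow, mul_pow, ← pow_mul]
    rw [mul_comm (‖q‖ ^ (j * (m + 1))) (‖C‖ ^ (m + 1))]
    apply mul_le_mul_of_nonneg_left _ (pow_nonneg (norm_nonneg _) _)
    exact pow_le_pow_of_le_one (norm_nonneg q) hq.le (Nat.le_mul_of_pos_right j (Nat.succ_pos m))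
  -- summability over pairs
  have hpair : ∀ (C : ℂ), ‖C‖ < 1 →
      Summable (fun p : ℕ × ℕ => ‖(q ^ p.2 * C) ^ (p.1 + 1) / ((p.1 + 1 : ℕ) : ℂ)‖) := by
    intro C hC
    have hgeo : Summable (fun m : ℕ => ‖C‖ ^ (m + 1)) :=
      ((summable_geometric_of_lt_one (norm_nonneg C) hC).mul_left ‖C‖).congr
        (fun m => (pow_succ' ‖C‖ m).symm)
    have hgq : Summable (fun j : ℕ => ‖q‖ ^ j) :=
      summable_geometric_of_lt_one (norm_nonneg q) hq
    have hprod : Summable (fun p : ℕ × ℕ => ‖C‖ ^ (p.1 + 1) * ‖q‖ ^ p.2) :=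
      hgeo.mul_of_nonneg hgq (fun m => pow_nonneg (norm_nonneg _) _)
        (fun j => pow_nonneg (norm_nonneg _) _)
    exact Summable.of_nonneg_of_le (fun p => norm_nonneg _) (fun p => bound C p.1 p.2) hprod
  have hFaS : Summable (Function.uncurry Fa) := Summable.of_norm (hpair A hA)
  have hFbS : Summable (Function.uncurry Fb) := Summable.of_norm (hpair B hB)
  -- geometric sum in j for fixed m
  have hgeoJ : ∀ (C : ℂ), ‖C‖ < 1 → ∀ m : ℕ,
      HasSum (fun j : ℕ => (q ^ j * C) ^ (m + 1) / ((m + 1 : ℕ) : ℂ))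
        ((1 - q ^ (m + 1))⁻¹ * (C ^ (m + 1) / ((m + 1 : ℕ) : ℂ))) := by
    intro C hC m
    have hqm : ‖q ^ (m + 1)‖ < 1 := by
      rw [norm_pow]; exact pow_lt_one₀ (norm_nonneg q) hq (Nat.succ_ne_zero m)
    have h := (hasSum_geometric_of_norm_lt_one hqm).mul_right (C ^ (m + 1) / ((m + 1 : ℕ) : ℂ))
    have heq : (fun j : ℕ => (q ^ j * C) ^ (m + 1) / ((m + 1 : ℕ) : ℂ))
        = fun j : ℕ => (q ^ (m + 1)) ^ j * (C ^ (m + 1) / ((m + 1 : ℕ) : ℂ)) := by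
      funext j
      rw [mul_pow, ← pow_mul, pow_mul', mul_div_assoc]
    rw [heq]
    exact h
  have hgA := hgeoJ A hA
  have hgB := hgeoJ B hB
  -- Taylor series sums in m
  have htay : ∀ (z : ℂ), ‖z‖ < 1 →
      HasSum (fun m : ℕ => z ^ (m + 1) / ((m + 1 : ℕ) : ℂ)) (-Complex.log (1 - z)) := by
    intro z hz
    have h := Complex.hasSum_taylorSeries_neg_log hz
    have h0 := (hasSum_nat_add_iff' 1).mpr h
    simpa using h0
  have htayA : ∀ j : ℕ, HasSum (fun m : ℕ => Fa m j) (-Complex.log (1 - q ^ j * A)) :=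
    fun j => htay (q ^ j * A) (hAj j)
  have htayB : ∀ j : ℕ, HasSum (fun m : ℕ => Fb m j) (-Complex.log (1 - q ^ j * B)) :=
    fun j => htay (q ^ j * B) (hBj j)
  have htayW : HasSum (fun m : ℕ => w ^ (m + 1) / ((m + 1 : ℕ) : ℂ)) (-Complex.log (1 - w)) :=
    htay w hw
  -- summability of the row-sums
  have sA : Summable (fun m : ℕ => ∑' j : ℕ, Fa m j) := hFaS.prod
  have sB : Summable (fun m : ℕ => ∑' j : ℕ, Fb m j) := hFbS.prod
  have sW : Summable (fun m : ℕ => w ^ (m + 1) / ((m + 1 : ℕ) : ℂ)) := htayW.summable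
  -- per-term split of FFterm
  have hsplit : ∀ m : ℕ, FFterm x r w (m + 1) =
      w ^ (m + 1) / ((m + 1 : ℕ) : ℂ) + ((∑' j : ℕ, Fa m j) - (∑' j : ℕ, Fb m j)) := by
    intro m
    rw [(hgA m).tsum_eq, (hgB m).tsum_eq]
    exact FFterm_eq hx0 hx1 hr w m
  have hSummable : Summable (fun m : ℕ => FFterm x r w (m + 1)) :=
    (sW.add (sA.sub sB)).congr (fun m => (hsplit m).symm)
  refine ⟨summable_norm_iff.mpr hSummable, ?_⟩
  -- swap the double sums
  have hswapA : ∑' m : ℕ, ∑' j : ℕ, Fa m j = ∑' j : ℕ, ∑' m : ℕ, Fa m j :=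
    (Summable.tsum_comm' hFaS (fun m => (hgA m).summable) (fun j => (htayA j).summable)).symm
  have hswapB : ∑' m : ℕ, ∑' j : ℕ, Fb m j = ∑' j : ℕ, ∑' m : ℕ, Fb m j :=
    (Summable.tsum_comm' hFbS (fun m => (hgB m).summable) (fun j => (htayB j).summable)).symm
  -- log-summability and nonvanishing
  have hneA : ∀ j : ℕ, 1 - q ^ j * A ≠ 0 := by
    intro j h
    have : ‖q ^ j * A‖ = 1 := by
      have : q ^ j * A = 1 := by linear_combination -h
      rw [this, norm_one]
    linarith [hAj j]
  have hneB : ∀ j : ℕ, 1 - q ^ j * B ≠ 0 := by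
    intro j h
    have : ‖q ^ j * B‖ = 1 := by
      have : q ^ j * B = 1 := by linear_combination -h
      rw [this, norm_one]
    linarith [hBj j]
  have hlogA : Summable (fun j : ℕ => Complex.log (1 - q ^ j * A)) := by
    refine (hFaS.prod_symm.prod.neg).congr (fun j => ?_)
    show -∑' (m : ℕ), Fa m j = _
    rw [(htayA j).tsum_eq, neg_neg]
  have hlogB : Summable (fun j : ℕ => Complex.log (1 - q ^ j * B)) := by
    refine (hFbS.prod_symm.prod.neg).congr (fun j => ?_)
    show -∑' (m : ℕ), Fb m j = _
    rw [(htayB j).tsum_eq, neg_neg]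
  -- products
  have hprodA : qPoch A q = Complex.exp (∑' j : ℕ, Complex.log (1 - q ^ j * A)) := by
    have h := hlogA.hasSum.cexp
    have h2 : (Complex.exp ∘ fun j : ℕ => Complex.log (1 - q ^ j * A))
        = fun j : ℕ => 1 - q ^ j * A := funext fun j => Complex.exp_log (hneA j)
    rw [h2] at h
    exact h.tprod_eq
  have hprodB : qPoch B q = Complex.exp (∑' j : ℕ, Complex.log (1 - q ^ j * B)) := by
    have h := hlogB.hasSum.cexp
    have h2 : (Complex.exp ∘ fun j : ℕ => Complex.log (1 - q ^ j * B))
        = fun j : ℕ => 1 - q ^ j * B := funext fun j => Complex.exp_log (hneB j)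
    rw [h2] at h
    exact h.tprod_eq
  -- compute the total sum
  have hS : ∑' m : ℕ, FFterm x r w (m + 1) =
      -Complex.log (1 - w) + (-(∑' j : ℕ, Complex.log (1 - q ^ j * A))
        - -(∑' j : ℕ, Complex.log (1 - q ^ j * B))) := by
    calc ∑' m : ℕ, FFterm x r w (m + 1)
        = ∑' m : ℕ, (w ^ (m + 1) / ((m + 1 : ℕ) : ℂ)
            + ((∑' j : ℕ, Fa m j) - (∑' j : ℕ, Fb m j))) := tsum_congr hsplit
      _ = (∑' m : ℕ, w ^ (m + 1) / ((m + 1 : ℕ) : ℂ))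
            + ((∑' m : ℕ, ∑' j : ℕ, Fa m j) - (∑' m : ℕ, ∑' j : ℕ, Fb m j)) := by
          rw [Summable.tsum_add sW (sA.sub sB), Summable.tsum_sub sA sB]
      _ = -Complex.log (1 - w) + ((∑' j : ℕ, ∑' m : ℕ, Fa m j)
            - (∑' j : ℕ, ∑' m : ℕ, Fb m j)) := by
          rw [htayW.tsum_eq, hswapA, hswapB]
      _ = -Complex.log (1 - w) + (-(∑' j : ℕ, Complex.log (1 - q ^ j * A))
            - -(∑' j : ℕ, Complex.log (1 - q ^ j * B))) := by
          rw [tsum_congr (fun j => (htayA j).tsum_eq), tsum_congr (fun j => (htayB j).tsum_eq),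
            tsum_neg, tsum_neg]
  have h1w : (1 : ℂ) - w ≠ 0 := by
    intro h
    have : w = 1 := by linear_combination -h
    rw [this, norm_one] at hw
    exact lt_irrefl 1 hw
  rw [hS, hprodA, hprodB]
  rw [show -(-Complex.log (1 - w) + (-(∑' j : ℕ, Complex.log (1 - q ^ j * A))
      - -(∑' j : ℕ, Complex.log (1 - q ^ j * B)))) =
      Complex.log (1 - w) + (∑' j : ℕ, Complex.log (1 - q ^ j * A))
      - (∑' j : ℕ, Complex.log (1 - q ^ j * B)) by ring]
  rw [Complex.exp_sub, Complex.exp_add, Complex.exp_log h1w]
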